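/- Let V = ℂ^d with standard basis e_1,…,e_d, let G ≤ S_d, and let S = Σ_{g∈G} e_{g(1)}⊗e_{g(2)}⊗⋯⊗e_{g(d)} ∈ V^{⊗d} be the molecule. Then the submodel generated by the GHZ tensor GHZ = Σ_j e_j⊗e_j⊗e_j, the transposition R = Σ_{i,j} e_i⊗e_j⊗e_i⊗e_j, and S equals the full group-action model: for every n ≥ 0, the n-th subspace of the generated submodel is exactly P^G_n = {x ∈ V^{⊗n} : g·x = x for all g ∈ G}. -/

import Mathlib

noncomputable section

attribute [local instance] Fintype.ofFinite

/-- `Tens d n` is `V^{⊗n}` for `V = ℂ^d`, realized via multi-index coordinates: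
`e_{i_1} ⊗ ⋯ ⊗ e_{i_n}` is the indicator function of the multi-index `(i_1, …, i_n)`.
In particular `Tens d 0 ≅ ℂ`. -/
abbrev Tens (d n : ℕ) := (Fin n → Fin d) → ℂ

/-- The basic tensor `e_{i_1} ⊗ ⋯ ⊗ e_{i_n}`. -/
def basicT {d n : ℕ} (i : Fin n → Fin d) : Tens d n :=
  fun j => if j = i then 1 else 0

/-- The diagonal action of `g ∈ S_d` on `V^{⊗n}`, determined by `g · e_i = e_{g(i)}`. -/
def spinAct {d n : ℕ} (g : Equiv.Perm (Fin d)) (x : Tens d n) : Tens d n :=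
  fun j => x (fun k => g⁻¹ (j k))

/-- Permutation of tensor factors `π(σ)`. -/
def permFactors {d n : ℕ} (σ : Equiv.Perm (Fin n)) (x : Tens d n) : Tens d n :=
  fun j => x (j ∘ σ)

/-- Tensor product of tensors. -/
def tensMul {d n m : ℕ} (x : Tens d n) (y : Tens d m) : Tens d (n + m) :=
  fun j => x (fun k => j (Fin.castAdd m k)) * y (fun k => j (Fin.natAdd n k))

/-- Contraction `C_{k,k+1} : V^{⊗(n+2)} → V^{⊗n}` of two adjacent tensor factors. -/
def contrT {d n : ℕ} (k : Fin (n + 1)) (x : Tens d (n + 2)) : Tens d n :=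
  fun j => ∑ i : Fin d, x ((k.castSucc).insertNth i (k.insertNth i j))

/-- The GHZ tensor `Σ_j e_j ⊗ e_j ⊗ e_j`. -/
def ghz (d : ℕ) : Tens d 3 := ∑ i : Fin d, basicT (fun _ => i)

/-- The transposition tensor `R = Σ_{i,j} e_i ⊗ e_j ⊗ e_i ⊗ e_j`. -/
def transpositionR (d : ℕ) : Tens d 4 :=
  ∑ i : Fin d, ∑ j : Fin d, basicT ![i, j, i, j]

/-- The molecule `S = Σ_{g ∈ G} e_{g(1)} ⊗ e_{g(2)} ⊗ ⋯ ⊗ e_{g(d)} ∈ V^{⊗d}`. -/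
def molecule {d : ℕ} (G : Subgroup (Equiv.Perm (Fin d))) : Tens d d :=
  ∑ g : G, basicT (fun k => (g : Equiv.Perm (Fin d)) k)

/-- A family of linear subspaces `Q n ⊆ V^{⊗n}` is a *submodel* if `Q 0 = ℂ` and the
family is closed under tensor products, all adjacent contractions `C_{k,k+1}`, and all
permutations of tensor factors. -/
structure IsSubmodel (d : ℕ) (Q : ∀ n : ℕ, Submodule ℂ (Tens d n)) : Prop where
  zero_top : Q 0 = ⊤
  tens_mem : ∀ {n m : ℕ} (x : Tens d n) (y : Tens d m),
    x ∈ Q n → y ∈ Q m → tensMul x y ∈ Q (n + m)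
  contr_mem : ∀ {n : ℕ} (k : Fin (n + 1)) (x : Tens d (n + 2)),
    x ∈ Q (n + 2) → contrT k x ∈ Q n
  perm_mem : ∀ {n : ℕ} (σ : Equiv.Perm (Fin n)) (x : Tens d n),
    x ∈ Q n → permFactors σ x ∈ Q n

-- toolkit
section Toolkit
variable {d n m N M : ℕ} {α β : Type*}

lemma comp_insertNth (f : α → β) (p : Fin (n+1)) (a : α) (q : Fin n → α) :
    (fun t => f ((p.insertNth a q : Fin (n+1) → α) t))
      = (p.insertNth (f a) (fun t => f (q t)) : Fin (n+1) → β) := by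
  symm
  rw [Fin.insertNth_eq_iff]
  refine ⟨by simp, ?_⟩
  funext t
  simp [Fin.removeNth]

lemma spinAct_basicT (g : Equiv.Perm (Fin d)) (i : Fin n → Fin d) :
    spinAct g (basicT i) = basicT (fun k => g (i k)) := by
  funext j
  simp only [spinAct, basicT]
  refine if_congr ?_ rfl rfl
  constructor
  · intro h
    funext k
    have := congrFun h k
    rw [← this]; simp
  · intro h
    subst h
    funext k
    simp

lemma spinAct_sum {s : Finset α} (g : Equiv.Perm (Fin d)) (f : α → Tens d n) :
    spinAct g (∑ a ∈ s, f a) = ∑ a ∈ s, spinAct g (f a) := by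
  funext j
  simp [spinAct, Finset.sum_apply]

lemma permFactors_basicT (σ : Equiv.Perm (Fin n)) (i : Fin n → Fin d) :
    permFactors σ (basicT i) = basicT (i ∘ ⇑σ⁻¹) := by
  funext j
  simp only [permFactors, basicT]
  refine if_congr ?_ rfl rfl
  constructor
  · intro h
    funext t
    have := congrFun h (σ⁻¹ t)
    simpa using this
  · rintro rfl
    funext t
    simp

lemma permFactors_sum {s : Finset α} (σ : Equiv.Perm (Fin n)) (f : α → Tens d n) :
    permFactors σ (∑ a ∈ s, f a) = ∑ a ∈ s, permFactors σ (f a) := by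
  funext j
  simp [permFactors, Finset.sum_apply]

lemma tensMul_basicT (i₁ : Fin n → Fin d) (i₂ : Fin m → Fin d) :
    tensMul (basicT i₁) (basicT i₂) = basicT (Fin.append i₁ i₂) := by
  funext j
  simp only [tensMul, basicT]
  rw [ite_zero_mul_ite_zero]
  refine if_congr ?_ (one_mul 1) rfl
  constructor
  · rintro ⟨h1, h2⟩
    funext t
    induction t using Fin.addCases with
    | left t => rw [Fin.append_left]; exact congrFun h1 t
    | right t => rw [Fin.append_right]; exact congrFun h2 t
  · rintro rfl
    constructor <;> funext t <;> simp [Fin.append_left, Fin.append_right]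

lemma tensMul_sum_left {s : Finset α} (f : α → Tens d n) (y : Tens d m) :
    tensMul (∑ a ∈ s, f a) y = ∑ a ∈ s, tensMul (f a) y := by
  funext j
  simp [tensMul, Finset.sum_apply, Finset.sum_mul]

lemma tensMul_sum_right {s : Finset α} (x : Tens d n) (f : α → Tens d m) :
    tensMul x (∑ a ∈ s, f a) = ∑ a ∈ s, tensMul x (f a) := by
  funext j
  simp [tensMul, Finset.sum_apply, Finset.mul_sum]

lemma contrT_sum {s : Finset α} (k : Fin (n+1)) (f : α → Tens d (n+2)) :
    contrT k (∑ a ∈ s, f a) = ∑ a ∈ s, contrT k (f a) := by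
  funext j
  simp only [contrT, Finset.sum_apply]
  rw [Finset.sum_comm]

lemma contrT_basicT (k : Fin (n+1)) (i : Fin (n+2) → Fin d) :
    contrT k (basicT i) = if i k.castSucc = i k.succ
      then basicT (fun t => i (k.castSucc.succAbove (k.succAbove t))) else 0 := by
  funext j
  have hkey : ∀ a : Fin d,
      ((k.castSucc).insertNth a (k.insertNth a j) = i) ↔
      (a = i k.castSucc ∧ (i k.castSucc = i k.succ ∧
        j = fun t => i (k.castSucc.succAbove (k.succAbove t)))) := by
    intro a
    rw [Fin.insertNth_eq_iff, Fin.insertNth_eq_iff]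
    simp only [Fin.removeNth, Fin.succAbove_castSucc_self]
    constructor
    · rintro ⟨h1, h2, h3⟩
      exact ⟨h1, by rw [← h1]; exact h2, h3⟩
    · rintro ⟨h1, h2, h3⟩
      exact ⟨h1, by rw [h1]; exact h2, h3⟩
  simp only [contrT, basicT, hkey, ite_and]
  rw [Finset.sum_ite_eq' Finset.univ (i k.castSucc)
    (fun _ => if i k.castSucc = i k.succ then
      (if j = fun t => i (k.castSucc.succAbove (k.succAbove t)) then (1:ℂ) else 0) else 0)]
  simp only [Finset.mem_univ, if_true]
  by_cases h : i k.castSucc = i k.succ <;> simp [h, Pi.zero_apply, basicT]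

lemma succAbove_val (p : Fin (N+1)) (t : Fin N) :
    ((p.succAbove t : Fin (N+1)) : ℕ) = if (t:ℕ) < (p:ℕ) then (t:ℕ) else (t:ℕ)+1 := by
  rw [Fin.succAbove]
  split_ifs with h1 h2 h3
  · rfl
  · exact absurd (by simpa [Fin.lt_def] using h1) h2
  · exact absurd (by simpa [Fin.lt_def] using h3) h1
  · rfl

lemma append_at_left (a : Fin N → α) (b : Fin M → α) (t : Fin (N+M)) (ht : (t:ℕ) < N) :
    Fin.append a b t = a ⟨t, ht⟩ :=
  (congrArg (Fin.append a b) (show t = Fin.castAdd M ⟨t, ht⟩ from Fin.ext rfl)).trans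
    (Fin.append_left a b _)

lemma append_at_right (a : Fin N → α) (b : Fin M → α) (t : Fin (N+M)) (ht : N ≤ (t:ℕ))
    (ht2 : (t:ℕ) - N < M) :
    Fin.append a b t = b ⟨(t:ℕ) - N, ht2⟩ :=
  (congrArg (Fin.append a b) (show t = Fin.natAdd N ⟨(t:ℕ)-N, ht2⟩ from
    Fin.ext (by simp; omega))).trans (Fin.append_right a b _)

lemma snoc_val (f : Fin N → α) (c : α) (t : Fin (N+1)) :
    (Fin.snoc f c : Fin (N+1) → α) t = if h : (t:ℕ) < N then f ⟨t, h⟩ else c := by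
  have := t.isLt
  split_ifs with h
  · exact (congrArg (Fin.snoc f c : Fin (N+1) → α)
      (show t = Fin.castSucc ⟨t,h⟩ from Fin.ext rfl)).trans (Fin.snoc_castSucc _ _ _)
  · exact (congrArg (Fin.snoc f c : Fin (N+1) → α)
      (show t = Fin.last N from Fin.ext (by simp; omega))).trans (Fin.snoc_last _ _)

end Toolkit

section Fwd
variable {d : ℕ}

lemma spinAct_contrT (g : Equiv.Perm (Fin d)) {n : ℕ} (k : Fin (n+1)) (x : Tens d (n+2)) :
    spinAct g (contrT k x) = contrT k (spinAct g x) := by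
  funext j
  show (∑ i : Fin d, x ((k.castSucc).insertNth i (k.insertNth i (fun t => g⁻¹ (j t)))))
    = ∑ i : Fin d, x (fun t => g⁻¹ (((k.castSucc).insertNth i (k.insertNth i j) : Fin (n+2) → Fin d) t))
  refine Fintype.sum_equiv (g : Equiv.Perm (Fin d)) _ _ (fun i => ?_)
  congr 1
  rw [comp_insertNth (⇑g⁻¹) k.castSucc (g i) ((k.insertNth (g i) j : Fin (n+1) → Fin d)),
    comp_insertNth (⇑g⁻¹) k (g i) j]
  simp

def invModel (G : Subgroup (Equiv.Perm (Fin d))) (n : ℕ) : Submodule ℂ (Tens d n) where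
  carrier := {x | ∀ g ∈ G, spinAct g x = x}
  add_mem' := by
    intro x y hx hy g hg
    show spinAct g (x + y) = x + y
    have : spinAct g (x + y) = spinAct g x + spinAct g y := rfl
    rw [this, hx g hg, hy g hg]
  zero_mem' := by intro g hg; rfl
  smul_mem' := by
    intro c x hx g hg
    show spinAct g (c • x) = c • x
    have : spinAct g (c • x) = c • spinAct g x := rfl
    rw [this, hx g hg]

lemma mem_invModel {G : Subgroup (Equiv.Perm (Fin d))} {n : ℕ} {x : Tens d n} :
    x ∈ invModel G n ↔ ∀ g ∈ G, spinAct g x = x := Iff.rfl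

lemma invModel_isSubmodel (G : Subgroup (Equiv.Perm (Fin d))) :
    IsSubmodel d (invModel G) := by
  constructor
  · rw [eq_top_iff]
    rintro x - g hg
    funext j
    exact congrArg x (funext fun k => k.elim0)
  · intro n m x y hx hy g hg
    show spinAct g (tensMul x y) = tensMul x y
    have : spinAct g (tensMul x y) = tensMul (spinAct g x) (spinAct g y) := rfl
    rw [this, hx g hg, hy g hg]
  · intro n k x hx g hg
    rw [spinAct_contrT, hx g hg]
  · intro n σ x hx g hg
    show spinAct g (permFactors σ x) = permFactors σ x
    have : spinAct g (permFactors σ x) = permFactors σ (spinAct g x) := rfl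
    rw [this, hx g hg]

lemma ghz_mem_invModel (G : Subgroup (Equiv.Perm (Fin d))) : ghz d ∈ invModel G 3 := by
  intro g hg
  rw [ghz, spinAct_sum]
  refine Fintype.sum_equiv (g : Equiv.Perm (Fin d)) _ _ (fun i => ?_)
  rw [spinAct_basicT]

lemma transpositionR_mem_invModel (G : Subgroup (Equiv.Perm (Fin d))) :
    transpositionR d ∈ invModel G 4 := by
  intro g hg
  rw [transpositionR, spinAct_sum]
  refine Fintype.sum_equiv (g : Equiv.Perm (Fin d)) _ _ (fun i => ?_)
  rw [spinAct_sum]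
  refine Fintype.sum_equiv (g : Equiv.Perm (Fin d)) _ _ (fun j => ?_)
  rw [spinAct_basicT]
  refine congrArg basicT ?_
  funext t
  fin_cases t <;> rfl

lemma molecule_mem_invModel (G : Subgroup (Equiv.Perm (Fin d))) :
    molecule G ∈ invModel G d := by
  intro g hg
  rw [molecule, spinAct_sum]
  refine Fintype.sum_equiv (Equiv.mulLeft (⟨g, hg⟩ : G)) _ _ (fun h => ?_)
  rw [spinAct_basicT]
  refine congrArg basicT ?_
  funext k
  simp [Equiv.Perm.mul_apply]

end Fwd

section Bwd
variable {d : ℕ}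

lemma snoc_comp_perm (g : Equiv.Perm (Fin d)) {n : ℕ} (j : Fin (n+1) → Fin d) :
    (Fin.snoc (fun k => g (j k)) (g (j (Fin.last n))) : Fin (n+2) → Fin d)
      = fun k => g ((Fin.snoc j (j (Fin.last n)) : Fin (n+2) → Fin d) k) := by
  funext t
  by_cases h : (t:ℕ) < n+1 <;> simp [snoc_val, h]

lemma del_sum {n : ℕ} (a : Fin (n+1) → Fin d) :
    (∑ i : Fin d, contrT (Fin.last n) ((tensMul (basicT a) (basicT (fun _ : Fin 1 => i))) : Tens d (n+1+1)))
      = basicT (fun t : Fin n => a t.castSucc) := by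
  have eL : ∀ i : Fin d, Fin.append a (fun _ : Fin 1 => i) ((Fin.last n).castSucc)
      = a (Fin.last n) := by
    intro i
    rw [append_at_left a _ _ (by simp)]
    exact congrArg a (Fin.ext (by simp))
  have eR : ∀ i : Fin d, Fin.append a (fun _ : Fin 1 => i) ((Fin.last n).succ) = i := by
    intro i
    rw [append_at_right a _ _ (by simp) (by simp)]
  have ebase : ∀ i : Fin d, (fun t : Fin n =>
      Fin.append a (fun _ : Fin 1 => i) ((Fin.last n).castSucc.succAbove ((Fin.last n).succAbove t)))
      = fun t : Fin n => a t.castSucc := by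
    intro i
    funext t
    have ht := t.isLt
    have hval : (((Fin.last n).castSucc.succAbove ((Fin.last n).succAbove t)) : ℕ) = (t:ℕ) := by
      rw [succAbove_val, succAbove_val]
      simp only [Fin.coe_castSucc, Fin.val_last]
      split_ifs <;> omega
    rw [append_at_left a _ _ (by omega)]
    exact congrArg a (Fin.ext (by simp [hval]))
  simp only [tensMul_basicT, contrT_basicT]
  have hterm : ∀ i : Fin d,
      (if Fin.append a (fun _ : Fin 1 => i) ((Fin.last n).castSucc)
          = Fin.append a (fun _ : Fin 1 => i) ((Fin.last n).succ)
        then basicT (fun t : Fin n =>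
          Fin.append a (fun _ : Fin 1 => i) ((Fin.last n).castSucc.succAbove ((Fin.last n).succAbove t)))
        else 0)
      = (if a (Fin.last n) = i then basicT (fun t : Fin n => a t.castSucc) else 0) := by
    intro i
    rw [eL, eR, ebase]
  rw [Finset.sum_congr rfl (fun i _ => hterm i)]
  rw [Finset.sum_ite_eq Finset.univ (a (Fin.last n)) (fun _ => basicT (fun t : Fin n => a t.castSucc))]
  simp

lemma dup_sum {n : ℕ} (a : Fin (n+1) → Fin d) :
    (∑ i : Fin d, contrT (⟨n, by omega⟩ : Fin (n+2+1)) ((tensMul (basicT a) (basicT (fun _ : Fin 3 => i))) : Tens d (n+1+3)))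
      = basicT (Fin.snoc a (a (Fin.last n)) : Fin (n+2) → Fin d) := by
  set k : Fin (n+2+1) := ⟨n, by omega⟩ with hk
  have hkc : ((k.castSucc : Fin (n+4)) : ℕ) = n := rfl
  have hks : ((k.succ : Fin (n+4)) : ℕ) = n + 1 := rfl
  have eL : ∀ i : Fin d, Fin.append a (fun _ : Fin 3 => i) (k.castSucc) = a (Fin.last n) := by
    intro i
    rw [append_at_left a _ _ (by rw [hkc]; omega)]
    exact congrArg a (Fin.ext (by simp [hkc, hk]))
  have eR : ∀ i : Fin d, Fin.append a (fun _ : Fin 3 => i) (k.succ) = i := by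
    intro i
    rw [append_at_right a _ _ (by rw [hks]) (by rw [hks]; omega)]
  have ebase : ∀ i : Fin d, a (Fin.last n) = i → (fun t : Fin (n+2) =>
      Fin.append a (fun _ : Fin 3 => i) (k.castSucc.succAbove (k.succAbove t)))
      = (Fin.snoc a (a (Fin.last n)) : Fin (n+2) → Fin d) := by
    intro i hc
    funext t
    have ht := t.isLt
    have hval : ((k.castSucc.succAbove (k.succAbove t)) : ℕ)
        = if (t:ℕ) < n then (t:ℕ) else (t:ℕ)+2 := by
      rw [succAbove_val, succAbove_val]
      simp only [hkc, show (k : ℕ) = n from rfl, Fin.val_succ, Fin.coe_castSucc]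
      split_ifs <;> omega
    by_cases h : (t:ℕ) < n
    · rw [append_at_left a _ _ (by rw [hval]; simp [h]; omega)]
      rw [snoc_val, dif_pos (by omega : (t:ℕ) < n+1)]
      refine congrArg a (Fin.ext ?_)
      show ((k.castSucc.succAbove (k.succAbove t)) : ℕ) = (t : ℕ)
      rw [hval]; simp [h]
    · rw [append_at_right a _ _ (by rw [hval]; simp only [if_neg h]; omega) (by rw [hval]; simp only [if_neg h]; omega)]
      rw [snoc_val]
      by_cases h2 : (t:ℕ) < n+1
      · rw [dif_pos h2, ← hc]
        exact congrArg a (Fin.ext (by simp; omega))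
      · rw [dif_neg h2]
        exact hc.symm
  simp only [tensMul_basicT, contrT_basicT]
  have hterm : ∀ i : Fin d,
      (if Fin.append a (fun _ : Fin 3 => i) (k.castSucc)
          = Fin.append a (fun _ : Fin 3 => i) (k.succ)
        then basicT (fun t : Fin (n+2) =>
          Fin.append a (fun _ : Fin 3 => i) (k.castSucc.succAbove (k.succAbove t)))
        else 0)
      = (if a (Fin.last n) = i
          then basicT (Fin.snoc a (a (Fin.last n)) : Fin (n+2) → Fin d) else 0) := by
    intro i
    rw [eL, eR]
    by_cases hc : a (Fin.last n) = i
    · rw [if_pos hc, if_pos hc, ebase i hc]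
    · rw [if_neg hc, if_neg hc]
  rw [Finset.sum_congr rfl (fun i _ => hterm i)]
  rw [Finset.sum_ite_eq Finset.univ (a (Fin.last n))
    (fun _ => basicT (Fin.snoc a (a (Fin.last n)) : Fin (n+2) → Fin d))]
  simp

def MT (G : Subgroup (Equiv.Perm (Fin d))) {n : ℕ} (j : Fin n → Fin d) : Tens d n :=
  ∑ g : G, basicT (fun k => (g : Equiv.Perm (Fin d)) (j k))

variable (G : Subgroup (Equiv.Perm (Fin d))) (Q : ∀ n : ℕ, Submodule ℂ (Tens d n))

lemma MT_perm (hQ : IsSubmodel d Q) {n : ℕ} (j : Fin n → Fin d) (σ : Equiv.Perm (Fin n))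
    (h : MT G j ∈ Q n) : MT G (fun k => j (σ k)) ∈ Q n := by
  have h2 := hQ.perm_mem σ⁻¹ _ h
  have key : permFactors σ⁻¹ (MT G j) = MT G (fun k => j (σ k)) := by
    rw [MT, permFactors_sum, MT]
    refine Finset.sum_congr rfl (fun g _ => ?_)
    rw [permFactors_basicT]
    refine congrArg basicT ?_
    funext t
    simp [Function.comp]
  rwa [key] at h2

lemma uT_mem (hQ : IsSubmodel d Q) (hghz : ghz d ∈ Q 3) :
    (∑ i : Fin d, basicT (fun _ : Fin 1 => i)) ∈ Q 1 := by
  have h := hQ.contr_mem (Fin.last 1) (ghz d) hghz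
  have key : contrT (Fin.last 1) (ghz d) = ∑ i : Fin d, basicT (fun _ : Fin 1 => i) := by
    rw [ghz, contrT_sum]
    refine Finset.sum_congr rfl (fun i _ => ?_)
    rw [contrT_basicT, if_pos rfl]
  rwa [key] at h

lemma MT_del (hQ : IsSubmodel d Q) (hghz : ghz d ∈ Q 3) {n : ℕ} (j : Fin (n+1) → Fin d)
    (h : MT G j ∈ Q (n+1)) : MT G (fun t : Fin n => j t.castSucc) ∈ Q n := by
  have h1 := hQ.tens_mem _ _ h (uT_mem Q hQ hghz)
  have h2 := hQ.contr_mem (Fin.last n)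
    ((tensMul (MT G j) (∑ i : Fin d, basicT (fun _ : Fin 1 => i))) : Tens d (n+1+1)) h1
  have key : contrT (Fin.last n)
      ((tensMul (MT G j) (∑ i : Fin d, basicT (fun _ : Fin 1 => i))) : Tens d (n+1+1))
      = MT G (fun t : Fin n => j t.castSucc) := by
    rw [MT, tensMul_sum_left, contrT_sum, MT]
    refine Finset.sum_congr rfl (fun g _ => ?_)
    rw [tensMul_sum_right, contrT_sum]
    exact (del_sum _).trans rfl
  rwa [key] at h2

lemma MT_dup (hQ : IsSubmodel d Q) (hghz : ghz d ∈ Q 3) {n : ℕ} (j : Fin (n+1) → Fin d)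
    (h : MT G j ∈ Q (n+1)) :
    MT G (Fin.snoc j (j (Fin.last n)) : Fin (n+2) → Fin d) ∈ Q (n+2) := by
  have h1 := hQ.tens_mem _ _ h hghz
  have h2 := hQ.contr_mem (⟨n, by omega⟩ : Fin (n+2+1))
    ((tensMul (MT G j) (ghz d)) : Tens d (n+1+3)) h1
  have key : contrT (⟨n, by omega⟩ : Fin (n+2+1))
      ((tensMul (MT G j) (ghz d)) : Tens d (n+1+3))
      = MT G (Fin.snoc j (j (Fin.last n)) : Fin (n+2) → Fin d) := by
    rw [MT, ghz, tensMul_sum_left, contrT_sum, MT]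
    refine Finset.sum_congr rfl (fun g _ => ?_)
    rw [tensMul_sum_right, contrT_sum]
    refine (dup_sum _).trans ?_
    exact congrArg basicT (snoc_comp_perm _ j)
  rwa [key] at h2

lemma molecule_eq_MT : molecule G = MT G (fun k => k) := rfl

lemma MT_inj_mem (hQ : IsSubmodel d Q) (hghz : ghz d ∈ Q 3) (hmol : molecule G ∈ Q d) :
    ∀ (s m : ℕ), m + s = d → ∀ j : Fin m → Fin d, Function.Injective j → MT G j ∈ Q m := by
  intro s
  induction s with
  | zero =>
    intro m hm j hj
    have hmd : m = d := by omega
    subst hmd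
    have hbij : Function.Bijective j :=
      (Fintype.bijective_iff_injective_and_card j).2 ⟨hj, rfl⟩
    have hmol' : MT G (fun k => k) ∈ Q m := hmol
    exact MT_perm G Q hQ (fun k => k) (Equiv.ofBijective j hbij) hmol'
  | succ s IH =>
    intro m hm j hj
    have hnotsurj : ¬ Function.Surjective j := by
      intro hs
      have := Fintype.card_le_of_surjective j hs
      simp only [Fintype.card_fin] at this
      omega
    obtain ⟨c, hc⟩ : ∃ c, ∀ t, j t ≠ c := by
      unfold Function.Surjective at hnotsurj
      push_neg at hnotsurj
      exact hnotsurj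
    have hj' : Function.Injective (Fin.snoc j c : Fin (m+1) → Fin d) := by
      intro a b hab
      induction a using Fin.lastCases with
      | last =>
        induction b using Fin.lastCases with
        | last => rfl
        | cast b =>
          rw [Fin.snoc_last, Fin.snoc_castSucc] at hab
          exact absurd hab.symm (hc b)
      | cast a =>
        induction b using Fin.lastCases with
        | last =>
          rw [Fin.snoc_last, Fin.snoc_castSucc] at hab
          exact absurd hab (hc a)
        | cast b =>
          rw [Fin.snoc_castSucc, Fin.snoc_castSucc] at hab
          rw [hj hab]
    have h1 := IH (m+1) (by omega) _ hj'
    have h2 := MT_del G Q hQ hghz _ h1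
    have key : (fun t : Fin m => (Fin.snoc j c : Fin (m+1) → Fin d) t.castSucc) = j :=
      funext fun t => Fin.snoc_castSucc _ _ _
    rwa [key] at h2

lemma MT_mem (hQ : IsSubmodel d Q) (hghz : ghz d ∈ Q 3) (hmol : molecule G ∈ Q d) :
    ∀ {m : ℕ} (j : Fin m → Fin d), MT G j ∈ Q m := by
  intro m
  induction m with
  | zero =>
    intro j
    rw [hQ.zero_top]
    exact Submodule.mem_top
  | succ m IH =>
    intro j
    by_cases hj : Function.Injective j
    · have hm : m + 1 ≤ d := by simpa using Fintype.card_le_of_injective j hj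
      exact MT_inj_mem G Q hQ hghz hmol (d - (m+1)) (m+1) (by omega) j hj
    · obtain ⟨a, b, hab, hne⟩ : ∃ a b, j a = j b ∧ a ≠ b := by
        unfold Function.Injective at hj
        push_neg at hj
        obtain ⟨a, b, h1, h2⟩ := hj
        exact ⟨a, b, h1, h2⟩
      cases m with
      | zero => exact absurd (Fin.ext (by have h1 := a.isLt; have h2 := b.isLt; omega)) hne
      | succ m' =>
        set p1 : Fin (m'+2) := (Fin.last m').castSucc with hp1
        set p2 : Fin (m'+2) := Fin.last (m'+1) with hp2
        have hp12 : p1 ≠ p2 := by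
          rw [hp1, hp2, Ne, Fin.ext_iff]
          simp
        set τ := Equiv.swap p2 b with hτ
        set a' := τ a with ha'
        have hτa' : τ a' = a := by rw [ha']; exact Equiv.swap_apply_self _ _ _
        have ha'p2 : a' ≠ p2 := by
          intro hh
          apply hne
          have : τ a' = τ p2 := congrArg τ hh
          rw [hτa'] at this
          rw [this, hτ, Equiv.swap_apply_left]
        set σ := (Equiv.swap p1 a').trans τ with hσ
        have hσ2 : σ p2 = b := by
          rw [hσ]
          show τ (Equiv.swap p1 a' p2) = b
          rw [Equiv.swap_apply_of_ne_of_ne hp12.symm (Ne.symm ha'p2), hτ,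
            Equiv.swap_apply_left]
        have hσ1 : σ p1 = a := by
          rw [hσ]
          show τ (Equiv.swap p1 a' p1) = a
          rw [Equiv.swap_apply_left, hτa']
        set j' : Fin (m'+1) → Fin d := fun t => j (σ t.castSucc) with hj'
        have key : (fun t => j (σ t)) = (Fin.snoc j' (j' (Fin.last m')) : Fin (m'+2) → Fin d) := by
          funext t
          induction t using Fin.lastCases with
          | last =>
            rw [Fin.snoc_last]
            show j (σ p2) = j' (Fin.last m')
            rw [hσ2, hj']
            show j b = j (σ ((Fin.last m').castSucc))
            rw [← hp1, hσ1, hab]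
          | cast t =>
            rw [Fin.snoc_castSucc]
        have h1 := IH j'
        have h2 := MT_dup G Q hQ hghz _ h1
        rw [← key] at h2
        have h3 := MT_perm G Q hQ _ σ⁻¹ h2
        have key2 : (fun k : Fin (m'+2) => (fun t => j (σ t)) (σ⁻¹ k)) = j := by
          funext k
          simp
        rwa [key2] at h3

lemma invariant_eq_combo {n : ℕ} (x : Tens d n) (hx : ∀ g ∈ G, spinAct g x = x) :
    x = ((Fintype.card G : ℂ))⁻¹ • ∑ j : Fin n → Fin d, x j • MT G j := by
  have hcard : (Fintype.card G : ℂ) ≠ 0 := Nat.cast_ne_zero.2 Fintype.card_ne_zero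
  funext t
  rw [Pi.smul_apply, Finset.sum_apply]
  have hstep : ∀ j : Fin n → Fin d, (x j • MT G j) t
      = ∑ g : G, x j * (if t = fun k => (g : Equiv.Perm (Fin d)) (j k) then 1 else 0) := by
    intro j
    rw [Pi.smul_apply, MT, Finset.sum_apply, smul_eq_mul, Finset.mul_sum]
    rfl
  rw [Finset.sum_congr rfl (fun j _ => hstep j), Finset.sum_comm]
  have hg : ∀ g : G,
      (∑ j : Fin n → Fin d, x j * (if t = fun k => (g : Equiv.Perm (Fin d)) (j k) then 1 else 0))
      = x t := by
    intro g
    have hcond : ∀ j : Fin n → Fin d,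
        (t = fun k => (g : Equiv.Perm (Fin d)) (j k))
          ↔ (j = fun k => (g : Equiv.Perm (Fin d))⁻¹ (t k)) := by
      intro j
      constructor
      · intro h
        funext k
        rw [congrFun h k]
        simp
      · intro h
        funext k
        rw [congrFun h k]
        simp
    simp only [hcond, mul_ite, mul_one, mul_zero]
    rw [Finset.sum_ite_eq' Finset.univ _ x]
    simp only [Finset.mem_univ, if_true]
    have h2 := hx (g : Equiv.Perm (Fin d)) g.2
    exact (congrFun h2 t : _)
  rw [Finset.sum_congr rfl (fun g _ => hg g), Finset.sum_const, Finset.card_univ]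
  simp only [smul_eq_mul, nsmul_eq_mul]
  rw [← mul_assoc, inv_mul_cancel₀ hcard, one_mul]

end Bwd


/-- The submodel generated by the GHZ tensor, the transposition `R`,
and the molecule `S` is the full group-action model: for every `n`, a tensor
`x ∈ V^{⊗n}` lies in every submodel containing GHZ, `R` and `S` if and only if
`x` is fixed by every `g ∈ G`. -/
theorem submodel_generated_by_ghz_R_molecule (d : ℕ)
    (G : Subgroup (Equiv.Perm (Fin d))) (n : ℕ) (x : Tens d n) :
    (∀ Q : ∀ m : ℕ, Submodule ℂ (Tens d m), IsSubmodel d Q →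
      ghz d ∈ Q 3 → transpositionR d ∈ Q 4 → molecule G ∈ Q d → x ∈ Q n) ↔
    (∀ g ∈ G, spinAct g x = x) := by
  constructor
  · intro h g hg
    exact h (invModel G) (invModel_isSubmodel G) (ghz_mem_invModel G)
      (transpositionR_mem_invModel G) (molecule_mem_invModel G) g hg
  · intro hx Q hQ h3 h4 hmol
    rw [invariant_eq_combo G x hx]
    exact Submodule.smul_mem _ _ (Submodule.sum_mem _
      (fun j _ => Submodule.smul_mem _ _ (MT_mem G Q hQ h3 hmol j)))

end
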